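/- Let n ≥ 1 and let T, U, W be real n×n matrices and d : Fin n → ℝ such that W * U = 1 and T = U * Matrix.diagonal d * W. Write u₀ j := U j 0, assume u₀ j > 0 for all j, d 0 > 0, and |d j| < d 0 for all j ≠ 0. Define T̂ := (d 0)⁻¹ • ((Matrix.diagonal u₀)⁻¹ * T * Matrix.diagonal u₀) and π m := U m 0 * W 0 m. Then for every k and all indices m', m: (T̂^k) m' m - π m = (U m 0 / U m' 0) * ∑_{j ≠ 0} (d j / d 0)^k * U m' j * W j m, and consequently Tendsto (fun k => (T̂^k) m' m) atTop (𝓝 (π m)). -/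

import Mathlib

open Matrix Filter Topology

/-- The iterated transition probabilities of the renormalized chain converge to
the stationary distribution `π m = U m 0 * W 0 m`, with an explicit spectral
formula for the error. -/
theorem iterates_converge_to_stationary
    {n : ℕ} (T U W : Matrix (Fin (n + 1)) (Fin (n + 1)) ℝ) (d : Fin (n + 1) → ℝ)
    (hWU : W * U = 1) (hT : T = U * Matrix.diagonal d * W)
    (hu : ∀ j, 0 < U j 0) (hd : 0 < d 0) (hdlt : ∀ j, j ≠ 0 → |d j| < d 0)
    (m' m : Fin (n + 1)) :
    (∀ k : ℕ,
      (((d 0)⁻¹ • ((Matrix.diagonal (fun j => U j 0))⁻¹ * T *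
          Matrix.diagonal (fun j => U j 0))) ^ k) m' m - U m 0 * W 0 m
        = (U m 0 / U m' 0) *
            ∑ j ∈ Finset.univ.erase 0, (d j / d 0) ^ k * U m' j * W j m) ∧
    Tendsto (fun k : ℕ =>
        (((d 0)⁻¹ • ((Matrix.diagonal (fun j => U j 0))⁻¹ * T *
            Matrix.diagonal (fun j => U j 0))) ^ k) m' m)
      atTop (𝓝 (U m 0 * W 0 m)) := by
  have huj : ∀ j, U j 0 ≠ 0 := fun j => (hu j).ne'
  have hd0 : d 0 ≠ 0 := hd.ne'
  set u : Fin (n + 1) → ℝ := fun j => U j 0 with hu0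
  set B : Matrix (Fin (n + 1)) (Fin (n + 1)) ℝ := Matrix.diagonal (fun j => (u j)⁻¹) with hB
  set D : Matrix (Fin (n + 1)) (Fin (n + 1)) ℝ := Matrix.diagonal u with hD
  have hBD : B * D = 1 := by
    rw [hB, hD, Matrix.diagonal_mul_diagonal,
      show (fun i => (u i)⁻¹ * u i) = fun _ => (1 : ℝ) from
        funext fun i => inv_mul_cancel₀ (huj i), Matrix.diagonal_one]
  have hDB : D * B = 1 := by
    rw [hD, hB, Matrix.diagonal_mul_diagonal,
      show (fun i => u i * (u i)⁻¹) = fun _ => (1 : ℝ) from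
        funext fun i => mul_inv_cancel₀ (huj i), Matrix.diagonal_one]
  have hDinv : D⁻¹ = B := Matrix.inv_eq_left_inv hBD
  have hUW : U * W = 1 := mul_eq_one_comm.mp hWU
  have hTk : ∀ k : ℕ, T ^ k = U * Matrix.diagonal (fun j => d j ^ k) * W := by
    intro k
    induction k with
    | zero =>
        simp [Matrix.diagonal_one, hUW]
    | succ k ih =>
        rw [pow_succ, ih, hT]
        calc U * Matrix.diagonal (fun j => d j ^ k) * W * (U * Matrix.diagonal d * W)
            = U * Matrix.diagonal (fun j => d j ^ k) * (W * U) * Matrix.diagonal d * W := by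
              simp only [Matrix.mul_assoc]
          _ = U * (Matrix.diagonal (fun j => d j ^ k) * Matrix.diagonal d) * W := by
              rw [hWU]; simp only [Matrix.mul_one, Matrix.mul_assoc]
          _ = U * Matrix.diagonal (fun j => d j ^ (k + 1)) * W := by
              rw [Matrix.diagonal_mul_diagonal]
              simp [pow_succ]
  have hconj : ∀ k : ℕ, (B * T * D) ^ k = B * T ^ k * D := by
    intro k
    induction k with
    | zero => simp [hBD]
    | succ k ih =>
        rw [pow_succ, ih]
        calc B * T ^ k * D * (B * T * D)
            = B * T ^ k * (D * B) * T * D := by simp only [Matrix.mul_assoc]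
          _ = B * T ^ (k + 1) * D := by
              rw [hDB, Matrix.mul_one, pow_succ]; simp only [Matrix.mul_assoc]
  have hentry : ∀ k : ℕ,
      (((d 0)⁻¹ • (D⁻¹ * T * D)) ^ k) m' m
        = ((d 0)⁻¹) ^ k * ((u m')⁻¹ * (∑ j, U m' j * d j ^ k * W j m) * u m) := by
    intro k
    rw [hDinv, smul_pow, Matrix.smul_apply, hconj, hTk]
    congr 1
    have h1 : (U * Matrix.diagonal (fun j => d j ^ k) * W) m' m
        = ∑ j, U m' j * d j ^ k * W j m := by
      rw [Matrix.mul_apply]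
      exact Finset.sum_congr rfl fun j _ => by rw [Matrix.mul_diagonal]
    calc (B * (U * Matrix.diagonal (fun j => d j ^ k) * W) * D) m' m
        = (B * (U * Matrix.diagonal (fun j => d j ^ k) * W)) m' m * u m := by
          rw [Matrix.mul_diagonal]
      _ = (u m')⁻¹ * (U * Matrix.diagonal (fun j => d j ^ k) * W) m' m * u m := by
          rw [Matrix.diagonal_mul]
      _ = (u m')⁻¹ * (∑ j, U m' j * d j ^ k * W j m) * u m := by rw [h1]
  have key : ∀ k : ℕ,
      (((d 0)⁻¹ • (D⁻¹ * T * D)) ^ k) m' m - U m 0 * W 0 m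
        = (U m 0 / U m' 0) *
            ∑ j ∈ Finset.univ.erase 0, (d j / d 0) ^ k * U m' j * W j m := by
    intro k
    rw [hentry k]
    have hsum : (U m 0 / U m' 0) *
        ∑ j ∈ Finset.univ.erase 0, (d j / d 0) ^ k * U m' j * W j m
        = ((d 0)⁻¹) ^ k *
            ((u m')⁻¹ * (∑ j ∈ Finset.univ.erase 0, U m' j * d j ^ k * W j m) * u m) := by
      rw [Finset.mul_sum, Finset.mul_sum, Finset.sum_mul, Finset.mul_sum]
      refine Finset.sum_congr rfl fun j _ => ?_
      rw [div_pow]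
      simp only [hu0]
      field_simp
      have hX : d 0 ^ k * (d 0)⁻¹ ^ k = 1 := by rw [← mul_pow, mul_inv_cancel₀ hd0, one_pow]
      linear_combination (-(U m 0 * d j ^ k * U m' j * W j m * (U m' 0)⁻¹)) * hX
    rw [hsum, ← Finset.sum_erase_add _ _ (Finset.mem_univ (0 : Fin (n + 1)))]
    have hpi : ((d 0)⁻¹) ^ k * ((u m')⁻¹ * (U m' 0 * d 0 ^ k * W 0 m) * u m)
        = U m 0 * W 0 m := by
      simp only [hu0]
      have h1 : ((d 0)⁻¹) ^ k * d 0 ^ k = 1 := by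
        rw [← mul_pow, inv_mul_cancel₀ hd0, one_pow]
      have h2 : (U m' 0)⁻¹ * U m' 0 = 1 := inv_mul_cancel₀ (huj m')
      linear_combination (W 0 m * U m 0 * (U m' 0)⁻¹ * U m' 0) * h1 +
        (W 0 m * U m 0) * h2
    linear_combination hpi
  constructor
  · exact key
  · have hlim : Tendsto (fun k : ℕ =>
        (U m 0 / U m' 0) *
          ∑ j ∈ Finset.univ.erase 0, (d j / d 0) ^ k * U m' j * W j m)
        atTop (𝓝 0) := by
      have hsum0 : Tendsto (fun k : ℕ =>
          ∑ j ∈ Finset.univ.erase 0, (d j / d 0) ^ k * U m' j * W j m)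
          atTop (𝓝 0) := by
        have : (0 : ℝ) = ∑ j ∈ Finset.univ.erase (0 : Fin (n + 1)), (0 : ℝ) := by simp
        rw [this]
        refine tendsto_finset_sum _ fun j hj => ?_
        have hj0 : j ≠ 0 := Finset.ne_of_mem_erase hj
        have habs : |d j / d 0| < 1 := by
          rw [abs_div, abs_of_pos hd]
          exact (div_lt_one hd).mpr (hdlt j hj0)
        have := (tendsto_pow_atTop_nhds_zero_of_abs_lt_one habs).mul_const (U m' j * W j m)
        simpa [mul_assoc] using this
      simpa using tendsto_const_nhds.mul hsum0
    have := hlim.const_add (U m 0 * W 0 m)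
    simp only [add_zero] at this
    refine this.congr fun k => ?_
    have := key k
    linarith [key k]
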